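/- Let R be a commutative noetherian ring and, for each maximal ideal m of R, let X(m) be a Thomason subset of Spec(R_m). If the family {X(m) : m a maximal ideal of R} satisfies condition (†), then the set X = ⋃_{m maximal} X(m)* is stable under specialization (if p ∈ X and p ⊆ q for primes p, q, then q ∈ X), and hence X is a Thomason subset of Spec(R); in particular the family is automatically compatible. -/

import Mathlib

open PrimeSpectrum
universe u

/-- A subset of `Spec A` is Thomason if it is a union of the zero loci
of a set of finitely generated ideals. -/
def IsThomason {A : Type*} [CommRing A] (X : Set (PrimeSpectrum A)) : Prop :=
  ∃ 𝓘 : Set (Ideal A), (∀ I ∈ 𝓘, I.FG) ∧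
    X = ⋃ I ∈ 𝓘, PrimeSpectrum.zeroLocus (I : Set A)

variable {R : Type u} [CommRing R]

/-- The map `Spec (R_m) → Spec R` induced by the localization map. -/
def locMap (m : MaximalSpectrum R) :
    PrimeSpectrum (Localization.AtPrime m.asIdeal) → PrimeSpectrum R :=
  PrimeSpectrum.comap (algebraMap R (Localization.AtPrime m.asIdeal))

/-- `Y*`: the image of a subset of `Spec (R_m)` in `Spec R`. -/
def star (m : MaximalSpectrum R)
    (Y : Set (PrimeSpectrum (Localization.AtPrime m.asIdeal))) : Set (PrimeSpectrum R) :=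
  locMap m '' Y

/-- Condition (†). -/
def Dagger (Xf : ∀ m : MaximalSpectrum R, Set (PrimeSpectrum (Localization.AtPrime m.asIdeal))) :
    Prop :=
  ∀ m m' : MaximalSpectrum R,
    {p ∈ star m (Xf m) | p.asIdeal ≤ m'.asIdeal} =
      {p ∈ star m' (Xf m') | p.asIdeal ≤ m.asIdeal}

/-- A compatible family of Thomason subsets: each `X(m)` is Thomason, the family
satisfies (†), and the union `⋃ X(m)*` is a Thomason subset of `Spec R`. -/
def CompatibleFamily
    (Xf : ∀ m : MaximalSpectrum R, Set (PrimeSpectrum (Localization.AtPrime m.asIdeal))) :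
    Prop :=
  (∀ m, IsThomason (Xf m)) ∧ Dagger Xf ∧ IsThomason (⋃ m, star m (Xf m))

/-- Over a commutative noetherian ring, a family of Thomason subsets satisfying (†)
glues to a specialization-closed, hence Thomason, subset; in particular the family
is automatically compatible. -/
lemma thomason_specClosed {A : Type*} [CommRing A] {X : Set (PrimeSpectrum A)}
    (h : IsThomason X) {p q : PrimeSpectrum A} (hp : p ∈ X) (hpq : p.asIdeal ≤ q.asIdeal) :
    q ∈ X := by
  obtain ⟨𝓘, -, rfl⟩ := h
  obtain ⟨I, hI, hpI⟩ := Set.mem_iUnion₂.1 hp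
  exact Set.mem_iUnion₂.2 ⟨I, hI, fun x hx => hpq (hpI hx)⟩

theorem stmt4 [IsNoetherianRing R]
    (Xf : ∀ m : MaximalSpectrum R, Set (PrimeSpectrum (Localization.AtPrime m.asIdeal)))
    (hXf : ∀ m, IsThomason (Xf m)) (hDagger : Dagger Xf) :
    (∀ p q : PrimeSpectrum R, p ∈ (⋃ m, star m (Xf m)) → p.asIdeal ≤ q.asIdeal →
      q ∈ ⋃ m, star m (Xf m)) ∧
    IsThomason (⋃ m, star m (Xf m)) ∧
    CompatibleFamily Xf := by

  have hspec : ∀ p q : PrimeSpectrum R, p ∈ (⋃ m, star m (Xf m)) → p.asIdeal ≤ q.asIdeal →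
      q ∈ ⋃ m, star m (Xf m) := by
    intro p q hp hpq
    obtain ⟨m, hm⟩ := Set.mem_iUnion.1 hp
    obtain ⟨mI, hmI, hqmI⟩ := q.asIdeal.exists_le_maximal q.isPrime.ne_top
    set M : MaximalSpectrum R := ⟨mI, hmI⟩
    have hpM : p ∈ star M (Xf M) := by
      have hd := hDagger m M
      have hmem : p ∈ {p ∈ star m (Xf m) | p.asIdeal ≤ M.asIdeal} :=
        ⟨hm, hpq.trans hqmI⟩
      rw [hd] at hmem
      exact hmem.1
    obtain ⟨p', hp', hpe⟩ := hpM
    set S := Localization.AtPrime M.asIdeal with hS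
    have hqdisj : Disjoint (M.asIdeal.primeCompl : Set R) (q.asIdeal : Set R) := by
      rw [Set.disjoint_iff]
      rintro x ⟨hx1, hx2⟩
      exact hx1 (hqmI hx2)
    have hqprime : (q.asIdeal.map (algebraMap R S)).IsPrime :=
      IsLocalization.isPrime_of_isPrime_disjoint M.asIdeal.primeCompl S q.asIdeal
        q.isPrime hqdisj
    refine Set.mem_iUnion.2 ⟨M, ⟨⟨_, hqprime⟩, ?_, ?_⟩⟩
    · refine thomason_specClosed (hXf M) hp' ?_
      have h1 : p'.asIdeal = p.asIdeal.map (algebraMap R S) := by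
        have := IsLocalization.map_comap M.asIdeal.primeCompl S p'.asIdeal
        rw [← hpe]
        exact this.symm
      rw [h1]
      exact Ideal.map_mono hpq
    · apply PrimeSpectrum.ext
      exact IsLocalization.comap_map_of_isPrime_disjoint M.asIdeal.primeCompl S (I := q.asIdeal)
        q.isPrime hqdisj
  have hthom : IsThomason (⋃ m, star m (Xf m)) := by
    refine ⟨PrimeSpectrum.asIdeal '' (⋃ m, star m (Xf m)), ?_, ?_⟩
    · rintro I ⟨p, -, rfl⟩
      exact IsNoetherian.noetherian p.asIdeal
    · ext q
      simp only [Set.mem_iUnion₂, Set.mem_image, PrimeSpectrum.mem_zeroLocus]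
      constructor
      · intro hq
        exact ⟨q.asIdeal, ⟨q, hq, rfl⟩, le_refl _⟩
      · rintro ⟨I, ⟨p, hp, rfl⟩, hle⟩
        exact hspec p q hp hle
  exact ⟨hspec, hthom, hXf, hDagger, hthom⟩
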